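/- Let γ₁, γ₂ ∈ ℝ and k₁, k₂ ∈ ℕ with (γ₁,k₁) ≻ (γ₂,k₂) in the lexicographic order (i.e. γ₁ > γ₂, or γ₁ = γ₂ and k₁ > k₂), with (γ₁,k₁) ≠ (0,0) and (γ₂,k₂) ≠ (0,0). Let μ₁ > 0, μ₂ > 0 and s ∈ {−1, 1}, and define φ(t) = μ₁·φ_{γ₁,k₁}(t) + s·μ₂·φ_{γ₂,k₂}(t), where φ_{γ,k}(t) = (1/k!)·(∏_{l=0}^{k−1}(t−l))·e^{γ(t−k)}. Then there exists N ∈ ℝ such that for all t ≥ N: if γ₁ ≥ 0 then φ'(t) > 0, and if γ₁ < 0 then φ'(t) < 0. -/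

import Mathlib

open Polynomial Real Filter Asymptotics Topology

lemma aux16_hasDerivAt (p : ℝ[X]) (γ t : ℝ) :
    HasDerivAt (fun x => p.eval x * Real.exp (γ * x))
      ((Polynomial.derivative p + Polynomial.C γ * p).eval t * Real.exp (γ * t)) t := by
  have h2 : HasDerivAt (fun x : ℝ => Real.exp (γ * x)) (Real.exp (γ * t) * γ) t := by
    simpa using ((hasDerivAt_id t).const_mul γ).exp
  have h : HasDerivAt (fun x => p.eval x * Real.exp (γ * x)) _ t := (p.hasDerivAt t).mul h2
  convert h using 1
  simp only [Polynomial.eval_add, Polynomial.eval_mul, Polynomial.eval_C]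
  ring

lemma aux16_tendsto_zero (q : ℝ[X]) {δ : ℝ} (hδ : δ < 0) :
    Tendsto (fun t => q.eval t * Real.exp (δ * t)) atTop (𝓝 0) := by
  have hne : (-δ) ≠ 0 := ne_of_gt (by linarith)
  have h := Polynomial.tendsto_div_exp_atTop (q.comp (Polynomial.C (-δ)⁻¹ * Polynomial.X))
  have hcomp : Tendsto (fun t : ℝ => (-δ) * t) atTop atTop :=
    Tendsto.const_mul_atTop (by linarith) tendsto_id
  refine (h.comp hcomp).congr fun t => ?_
  simp only [Function.comp_apply, Polynomial.eval_comp, Polynomial.eval_mul,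
    Polynomial.eval_C, Polynomial.eval_X, inv_mul_cancel_left₀ hne]
  rw [div_eq_mul_inv, ← Real.exp_neg]
  ring_nf

lemma aux16_deg_ne (p : ℝ[X]) (hp : p.Monic) {γ : ℝ} (hγ : γ ≠ 0) :
    (Polynomial.derivative p + Polynomial.C γ * p).natDegree = p.natDegree ∧
      (Polynomial.derivative p + Polynomial.C γ * p).leadingCoeff = γ := by
  have hlt : (Polynomial.derivative p).degree < (Polynomial.C γ * p).degree := by
    rw [Polynomial.degree_C_mul hγ]
    exact Polynomial.degree_derivative_lt hp.ne_zero
  refine ⟨?_, ?_⟩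
  · rw [Polynomial.natDegree_add_eq_right_of_degree_lt hlt, Polynomial.natDegree_C_mul hγ]
  · rw [Polynomial.leadingCoeff_add_of_degree_lt hlt, Polynomial.leadingCoeff_mul,
      Polynomial.leadingCoeff_C, hp.leadingCoeff, mul_one]

lemma aux16_deg_zero (p : ℝ[X]) (hp : p.Monic) {k : ℕ} (hdeg : p.natDegree = k) (hk : 1 ≤ k) :
    (Polynomial.derivative p).natDegree = k - 1 ∧
      (Polynomial.derivative p).leadingCoeff = (k : ℝ) := by
  have hco : (Polynomial.derivative p).coeff (k - 1) = (k : ℝ) := by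
    rw [Polynomial.coeff_derivative, show k - 1 + 1 = k from Nat.succ_pred_eq_of_pos hk]
    have h1 : p.coeff k = 1 := by rw [← hdeg]; exact hp.coeff_natDegree
    have h2 : ((k - 1 : ℕ) : ℝ) + 1 = (k : ℝ) := by
      rw [Nat.cast_sub hk]; push_cast; ring
    rw [h1, h2, one_mul]
  have hkne : ((k : ℝ)) ≠ 0 := Nat.cast_ne_zero.2 (by omega)
  have hnd : (Polynomial.derivative p).natDegree = k - 1 := by
    refine le_antisymm ?_ (Polynomial.le_natDegree_of_ne_zero (by rw [hco]; exact hkne))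
    have := Polynomial.natDegree_derivative_le p
    omega
  exact ⟨hnd, by rw [Polynomial.leadingCoeff, hnd, hco]⟩

/-- Eventual strict sign of the derivative of
`φ = μ₁·φ_{γ₁,k₁} + s·μ₂·φ_{γ₂,k₂}` when `(γ₁,k₁) ≻ (γ₂,k₂)` lexicographically:
positive if `γ₁ ≥ 0`, negative if `γ₁ < 0`. -/
theorem stmt_16 (γ₁ γ₂ : ℝ) (k₁ k₂ : ℕ)
    (hlex : γ₂ < γ₁ ∨ (γ₁ = γ₂ ∧ k₂ < k₁))
    (h₁ : ¬(γ₁ = 0 ∧ k₁ = 0)) (h₂ : ¬(γ₂ = 0 ∧ k₂ = 0))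
    (μ₁ μ₂ : ℝ) (hμ₁ : 0 < μ₁) (hμ₂ : 0 < μ₂)
    (s : ℝ) (hs : s = -1 ∨ s = 1)
    (φ : ℝ → ℝ)
    (hφ : ∀ t : ℝ, φ t =
      μ₁ * ((1 / (k₁.factorial : ℝ)) * (∏ l ∈ Finset.range k₁, (t - l)) *
        Real.exp (γ₁ * (t - k₁)))
      + s * (μ₂ * ((1 / (k₂.factorial : ℝ)) * (∏ l ∈ Finset.range k₂, (t - l)) *
        Real.exp (γ₂ * (t - k₂))))) :
    ∃ N : ℝ, ∀ t : ℝ, N ≤ t →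
      (0 ≤ γ₁ → 0 < deriv φ t) ∧ (γ₁ < 0 → deriv φ t < 0) := by
  classical
  -- basic setup
  set p₁ : ℝ[X] := ∏ l ∈ Finset.range k₁, (Polynomial.X - Polynomial.C (l : ℝ)) with hp₁def
  set p₂ : ℝ[X] := ∏ l ∈ Finset.range k₂, (Polynomial.X - Polynomial.C (l : ℝ)) with hp₂def
  have hmono : ∀ k : ℕ,
      (∏ l ∈ Finset.range k, (Polynomial.X - Polynomial.C (l : ℝ))).Monic := fun k =>
    Polynomial.monic_prod_of_monic _ _ fun i _ => Polynomial.monic_X_sub_C _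
  have hdegk : ∀ k : ℕ,
      (∏ l ∈ Finset.range k, (Polynomial.X - Polynomial.C (l : ℝ))).natDegree = k := by
    intro k
    rw [Polynomial.natDegree_prod _ _ (fun i _ => Polynomial.X_sub_C_ne_zero _)]
    simp only [Polynomial.natDegree_X_sub_C]
    simp
  set q₁ : ℝ[X] := Polynomial.derivative p₁ + Polynomial.C γ₁ * p₁ with hq₁def
  set q₂ : ℝ[X] := Polynomial.derivative p₂ + Polynomial.C γ₂ * p₂ with hq₂def
  set c₁ : ℝ := μ₁ * Real.exp (-(γ₁ * k₁)) / (k₁.factorial : ℝ) with hc₁def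
  set c₂ : ℝ := s * μ₂ * Real.exp (-(γ₂ * k₂)) / (k₂.factorial : ℝ) with hc₂def
  have hc₁pos : 0 < c₁ := by
    apply div_pos (mul_pos hμ₁ (Real.exp_pos _))
    exact_mod_cast Nat.factorial_pos k₁
  set δ : ℝ := γ₂ - γ₁ with hδdef
  -- rewrite φ
  have hφ' : ∀ t : ℝ, φ t =
      c₁ * (p₁.eval t * Real.exp (γ₁ * t)) + c₂ * (p₂.eval t * Real.exp (γ₂ * t)) := by
    intro t
    rw [hφ t]
    have he₁ : γ₁ * (t - (k₁ : ℝ)) = -(γ₁ * k₁) + γ₁ * t := by ring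
    have he₂ : γ₂ * (t - (k₂ : ℝ)) = -(γ₂ * k₂) + γ₂ * t := by ring
    rw [he₁, he₂, Real.exp_add, Real.exp_add]
    simp only [hc₁def, hc₂def, hp₁def, hp₂def, Polynomial.eval_prod, Polynomial.eval_sub,
      Polynomial.eval_X, Polynomial.eval_C]
    ring
  -- the derivative
  set ψ : ℝ → ℝ := fun t => c₁ * q₁.eval t + c₂ * (q₂.eval t * Real.exp (δ * t)) with hψdef
  have hDφ : ∀ t : ℝ, deriv φ t = ψ t * Real.exp (γ₁ * t) := by
    intro t
    have hd : HasDerivAt φ (ψ t * Real.exp (γ₁ * t)) t := by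
      have h := ((aux16_hasDerivAt p₁ γ₁ t).const_mul c₁).add
        ((aux16_hasDerivAt p₂ γ₂ t).const_mul c₂)
      have hfe : (fun x => c₁ * (p₁.eval x * Real.exp (γ₁ * x))
          + c₂ * (p₂.eval x * Real.exp (γ₂ * x))) = φ := funext fun x => (hφ' x).symm
      have hfe' : ((fun y => c₁ * (p₁.eval y * Real.exp (γ₁ * y)))
          + fun y => c₂ * (p₂.eval y * Real.exp (γ₂ * y))) = φ := hfe
      rw [hfe'] at h
      replace h : HasDerivAt φ _ t := h
      convert h using 1
      have : γ₂ * t = δ * t + γ₁ * t := by rw [hδdef]; ring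
      rw [hψdef, hq₁def, hq₂def, this, Real.exp_add]
      ring
    exact hd.deriv
  -- degree and leading coefficient of q₁
  have hk₁pos : γ₁ = 0 → 1 ≤ k₁ := fun h => Nat.one_le_iff_ne_zero.2 fun hk => h₁ ⟨h, hk⟩
  set m : ℕ := q₁.natDegree with hmdef
  set L : ℝ := q₁.leadingCoeff with hLdef
  have hq₁facts : (m = if γ₁ = 0 then k₁ - 1 else k₁) ∧
      (0 ≤ γ₁ → 0 < L) ∧ (γ₁ < 0 → L < 0) := by
    by_cases hγ : γ₁ = 0
    · have hq : q₁ = Polynomial.derivative p₁ := by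
        rw [hq₁def, hγ]; simp
      obtain ⟨hd, hl⟩ := aux16_deg_zero p₁ (hmono k₁) (hdegk k₁) (hk₁pos hγ)
      refine ⟨by rw [if_pos hγ, hmdef, hq, hd], fun _ => ?_, fun h => absurd hγ (by linarith)⟩
      rw [hLdef, hq, hl]
      exact_mod_cast hk₁pos hγ
    · obtain ⟨hd, hl⟩ := aux16_deg_ne p₁ (hmono k₁) hγ
      refine ⟨by rw [if_neg hγ, hmdef, hd, hdegk k₁], ?_, ?_⟩
      · intro h; rw [hLdef, hl]; exact lt_of_le_of_ne h (Ne.symm hγ)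
      · intro h; rw [hLdef, hl]; exact h
  obtain ⟨hm, hLpos, hLneg⟩ := hq₁facts
  have hLne : L ≠ 0 := by
    rcases lt_or_ge γ₁ 0 with h | h
    · exact ne_of_lt (hLneg h)
    · exact ne_of_gt (hLpos h)
  set A : ℝ := c₁ * L with hAdef
  have hAne : A ≠ 0 := mul_ne_zero (ne_of_gt hc₁pos) hLne
  -- the remainder is little-o of t^m
  have hq₂le : q₂.natDegree ≤ k₂ := by
    refine le_trans (Polynomial.natDegree_add_le _ _) (max_le ?_ ?_)
    · exact le_trans (Polynomial.natDegree_derivative_le p₂) (by rw [hdegk k₂]; omega)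
    · exact le_trans (Polynomial.natDegree_C_mul_le _ _) (le_of_eq (hdegk k₂))
  have hrem : (fun t : ℝ => q₂.eval t * Real.exp (δ * t)) =o[atTop]
      fun t : ℝ => t ^ m := by
    rcases hlex with hlt | ⟨heq, hklt⟩
    · -- γ₂ < γ₁ : exponential decay
      have hδneg : δ < 0 := by rw [hδdef]; linarith
      have h0 : (fun t : ℝ => q₂.eval t * Real.exp (δ * t)) =o[atTop]
          (fun _ : ℝ => (1 : ℝ)) :=
        (isLittleO_one_iff ℝ).2 (aux16_tendsto_zero q₂ hδneg)
      refine h0.trans_isBigO (isBigO_iff.2 ⟨1, ?_⟩)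
      filter_upwards [eventually_ge_atTop (1 : ℝ)] with t ht
      have : (1 : ℝ) ≤ t ^ m := one_le_pow₀ ht
      rw [norm_one, Real.norm_eq_abs, abs_of_nonneg (by linarith), one_mul]
      exact this
    · -- γ₁ = γ₂ : polynomial of strictly smaller degree
      have hδ0 : δ = 0 := by rw [hδdef, heq]; ring
      have hq₂lt : q₂.natDegree < m := by
        by_cases hγ : γ₁ = 0
        · have hγ₂ : γ₂ = 0 := heq ▸ hγ
          have hk₂pos : 1 ≤ k₂ := Nat.one_le_iff_ne_zero.2 fun hk => h₂ ⟨hγ₂, hk⟩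
          have hq : q₂ = Polynomial.derivative p₂ := by rw [hq₂def, hγ₂]; simp
          have : q₂.natDegree ≤ k₂ - 1 := by
            rw [hq]
            exact le_trans (Polynomial.natDegree_derivative_le p₂) (by rw [hdegk k₂])
          rw [hm, if_pos hγ]
          omega
        · rw [hm, if_neg hγ]
          omega
      have h1 : (fun t : ℝ => q₂.eval t) =O[atTop] fun t : ℝ => t ^ q₂.natDegree := by
        refine (Polynomial.isEquivalent_atTop_lead q₂).isBigO.trans ?_
        exact (isBigO_refl (fun t : ℝ => t ^ q₂.natDegree) atTop).const_mul_left _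
      have h2 : (fun t : ℝ => t ^ q₂.natDegree) =o[atTop] fun t : ℝ => t ^ m :=
        isLittleO_pow_pow_atTop_of_lt hq₂lt
      refine (h1.trans_isLittleO h2).congr_left fun t => ?_
      rw [hδ0, zero_mul, Real.exp_zero, mul_one]
  -- ψ - A t^m is little-o of t^m
  have hlittle : (fun t : ℝ => ψ t - A * t ^ m) =o[atTop] fun t : ℝ => t ^ m := by
    have hlead : (fun t : ℝ => q₁.eval t - L * t ^ m) =o[atTop] fun t : ℝ => t ^ m := by
      have h := (Polynomial.isEquivalent_atTop_lead q₁).isLittleO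
      rw [← hLdef, ← hmdef] at h
      exact (isLittleO_const_mul_right_iff hLne).1 h
    have hsum := (hlead.const_mul_left c₁).add (hrem.const_mul_left c₂)
    refine hsum.congr_left fun t => ?_
    rw [hψdef, hAdef]
    ring
  have hbound := hlittle.def (show (0 : ℝ) < |A| / 2 by positivity)
  -- eventual sign
  have hev : ∀ᶠ t in atTop,
      (0 ≤ γ₁ → 0 < deriv φ t) ∧ (γ₁ < 0 → deriv φ t < 0) := by
    filter_upwards [hbound, eventually_ge_atTop (1 : ℝ)] with t hb ht1
    have htm : 0 < t ^ m := pow_pos (by linarith) m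
    rw [Real.norm_eq_abs, Real.norm_eq_abs, abs_of_pos htm] at hb
    have habs := abs_le.1 hb
    have hexp : 0 < Real.exp (γ₁ * t) := Real.exp_pos _
    constructor
    · intro hγ
      have hA : 0 < A := mul_pos hc₁pos (hLpos hγ)
      rw [abs_of_pos hA] at habs
      have key : ∀ a x y : ℝ, 0 < a → 0 < x → -(a / 2 * x) ≤ y - a * x → 0 < y := by
        intro a x y ha hx h; nlinarith
      have hψpos : 0 < ψ t := key A (t ^ m) (ψ t) hA htm habs.1
      rw [hDφ t]
      exact mul_pos hψpos hexp
    · intro hγ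
      have hA : A < 0 := mul_neg_of_pos_of_neg hc₁pos (hLneg hγ)
      rw [abs_of_neg hA] at habs
      have key : ∀ a x y : ℝ, a < 0 → 0 < x → y - a * x ≤ -a / 2 * x → y < 0 := by
        intro a x y ha hx h; nlinarith
      have hψneg : ψ t < 0 := key A (t ^ m) (ψ t) hA htm habs.2
      rw [hDφ t]
      exact mul_neg_of_neg_of_pos hψneg hexp
  obtain ⟨N, hN⟩ := eventually_atTop.mp hev
  exact ⟨N, fun t ht => hN t ht⟩
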